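/- Fix reals 0 < r < 1 and 0 < ε < 1, and let M = ⌊10^{n/2}⌋. If a_1,...,a_n are i.i.d. uniform on {1,...,M} and β = ⌊r Σ_{j=1}^n a_j⌋, then the probability that every branch-and-bound tree for the problem {x ∈ {0,1}^n : Σ a_j x_j = β} (branching on individual variables in any order, pruning a node only if its LP relaxation with the fixed variables is infeasible) has at least 2^{n^{1-ε}} nodes tends to 1 as n → ∞. -/

import Mathlib

open Filter

/-- The LP relaxation of the subset sum instance `∑ aⱼ xⱼ = β`, `x ∈ [0,1]ⁿ`, is feasible at a
branch-and-bound node given by the list `σ` of branching decisions (variable, 0/1 value). -/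
def LPFeasibleAt (n : ℕ) (a : Fin n → ℕ) (β : ℤ) (σ : List (Fin n × Bool)) : Prop :=
  ∃ x : Fin n → ℝ, (∀ j, 0 ≤ x j ∧ x j ≤ 1) ∧
    (∀ p ∈ σ, x p.1 = if p.2 then 1 else 0) ∧
    (∑ j, (a j : ℝ) * x j) = (β : ℝ)

/-- `T` is a branch-and-bound tree for the subset sum instance `∑ aⱼ xⱼ = β`, `x ∈ {0,1}ⁿ`:
nodes are identified with their lists of branching decisions, the root belongs to `T`, every
non-leaf node branches on a single previously unfixed variable (creating the two children
fixing it to 0 and to 1), and a node may be a leaf only if it is pruned by LP infeasibility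
or has all `n` variables fixed. -/
def IsBBTree (n : ℕ) (a : Fin n → ℕ) (β : ℤ) (T : Set (List (Fin n × Bool))) : Prop :=
  T.Finite ∧
  ([] : List (Fin n × Bool)) ∈ T ∧
  (∀ σ ∈ T, (∃ j b, σ ++ [(j, b)] ∈ T) →
    ∃ j : Fin n, j ∉ σ.map Prod.fst ∧
      σ ++ [(j, false)] ∈ T ∧ σ ++ [(j, true)] ∈ T ∧
      ∀ j' b, σ ++ [(j', b)] ∈ T → j' = j) ∧
  (∀ σ ∈ T, (∀ j b, σ ++ [(j, b)] ∉ T) → ¬ LPFeasibleAt n a β σ ∨ σ.length = n)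

/-- If the fixed variables cannot move the sum outside `[β, β]`'s reach, the LP is feasible. -/
lemma lp_feasible {n : ℕ} (a : Fin n → ℕ) (β : ℤ) (M : ℕ)
    (ha1 : ∀ j, 1 ≤ a j) (haM : ∀ j, a j ≤ M)
    (σ : List (Fin n × Bool))
    (hnodup : (σ.map Prod.fst).Nodup) (hlen : σ.length < n)
    (hβ1 : ((σ.length : ℝ) * M) ≤ (β : ℝ))
    (hβ2 : (β : ℝ) ≤ (∑ j, (a j : ℝ)) - (σ.length : ℝ) * M) :
    LPFeasibleAt n a β σ := by
  classical
  set T1 : Finset (Fin n) := Finset.univ.filter (fun j => (j, true) ∈ σ) with hT1def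
  set T0 : Finset (Fin n) := Finset.univ.filter (fun j => (j, false) ∈ σ) with hT0def
  have hmem1 : ∀ j, j ∈ T1 ↔ (j, true) ∈ σ := by intro j; simp [hT1def]
  have hmem0 : ∀ j, j ∈ T0 ↔ (j, false) ∈ σ := by intro j; simp [hT0def]
  have hdisj : Disjoint T1 T0 := by
    rw [Finset.disjoint_left]
    intro j hj1 hj0
    have h1 : (j, true) ∈ σ := (hmem1 j).1 hj1
    have h0 : (j, false) ∈ σ := (hmem0 j).1 hj0
    have := List.inj_on_of_nodup_map hnodup h1 h0 rfl
    simp at this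
  have hcard : T1.card + T0.card ≤ σ.length := by
    have hsub : T1 ∪ T0 ⊆ (σ.map Prod.fst).toFinset := by
      intro j hj
      rcases Finset.mem_union.mp hj with h | h
      · exact List.mem_toFinset.mpr (List.mem_map.mpr ⟨(j, true), (hmem1 j).1 h, rfl⟩)
      · exact List.mem_toFinset.mpr (List.mem_map.mpr ⟨(j, false), (hmem0 j).1 h, rfl⟩)
    calc T1.card + T0.card = (T1 ∪ T0).card := (Finset.card_union_of_disjoint hdisj).symm
    _ ≤ (σ.map Prod.fst).toFinset.card := Finset.card_le_card hsub
    _ ≤ (σ.map Prod.fst).length := List.toFinset_card_le _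
    _ = σ.length := by simp
  set S1 : ℝ := ∑ j ∈ T1, (a j : ℝ) with hS1def
  set S0 : ℝ := ∑ j ∈ T0, (a j : ℝ) with hS0def
  set AF : ℝ := ∑ j ∈ (T1 ∪ T0)ᶜ, (a j : ℝ) with hAFdef
  have hsplit : S1 + S0 + AF = ∑ j, (a j : ℝ) := by
    have h := Finset.sum_add_sum_compl (T1 ∪ T0) (fun j => (a j : ℝ))
    rw [Finset.sum_union hdisj] at h
    linarith [h]
  have hAFpos : (0 : ℝ) < AF := by
    have hFne : ((T1 ∪ T0)ᶜ : Finset (Fin n)).Nonempty := by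
      rw [← Finset.card_pos, Finset.card_compl, Fintype.card_fin]
      have h1 : (T1 ∪ T0).card ≤ σ.length := le_trans (Finset.card_union_le _ _) hcard
      omega
    obtain ⟨j, hj⟩ := hFne
    have h1 : (1 : ℝ) ≤ (a j : ℝ) := by exact_mod_cast ha1 j
    have h2 : (a j : ℝ) ≤ AF :=
      Finset.single_le_sum (f := fun j => (a j : ℝ)) (fun i _ => by positivity) hj
    linarith
  have hS1M : S1 ≤ (σ.length : ℝ) * M := by
    have h1 : S1 ≤ T1.card • (M : ℝ) :=
      Finset.sum_le_card_nsmul T1 _ (M : ℝ) (fun j _ => by exact_mod_cast haM j)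
    rw [nsmul_eq_mul] at h1
    have h2 : (T1.card : ℝ) ≤ (σ.length : ℝ) := by exact_mod_cast le_trans (Nat.le_add_right _ _) hcard
    nlinarith [Nat.cast_nonneg (α := ℝ) M]
  have hS0M : S0 ≤ (σ.length : ℝ) * M := by
    have h1 : S0 ≤ T0.card • (M : ℝ) :=
      Finset.sum_le_card_nsmul T0 _ (M : ℝ) (fun j _ => by exact_mod_cast haM j)
    rw [nsmul_eq_mul] at h1
    have h2 : (T0.card : ℝ) ≤ (σ.length : ℝ) := by exact_mod_cast le_trans (Nat.le_add_left _ _) hcard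
    nlinarith [Nat.cast_nonneg (α := ℝ) M]
  set c : ℝ := ((β : ℝ) - S1) / AF with hcdef
  have hc0 : 0 ≤ c := by
    apply div_nonneg _ hAFpos.le
    linarith
  have hc1 : c ≤ 1 := by
    rw [div_le_one hAFpos]
    linarith
  refine ⟨fun j => if j ∈ T1 then 1 else if j ∈ T0 then 0 else c, ?_, ?_, ?_⟩
  · intro j
    by_cases h1 : j ∈ T1 <;> by_cases h0 : j ∈ T0 <;> simp [h1, h0, hc0, hc1]
  · rintro ⟨j, b⟩ hp
    cases b
    · have h0 : j ∈ T0 := (hmem0 j).2 hp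
      have h1 : j ∉ T1 := fun h => (Finset.disjoint_left.mp hdisj h) h0
      simp [h0, h1]
    · have h1 : j ∈ T1 := (hmem1 j).2 hp
      simp [h1]
  · have e1 : ∑ j ∈ T1, (a j : ℝ) * (if j ∈ T1 then 1 else if j ∈ T0 then 0 else c) = S1 := by
      rw [hS1def]
      refine Finset.sum_congr rfl (fun j hj => by simp [hj])
    have e0 : ∑ j ∈ T0, (a j : ℝ) * (if j ∈ T1 then 1 else if j ∈ T0 then 0 else c) = 0 := by
      refine Finset.sum_eq_zero (fun j hj => ?_)
      have h1 : j ∉ T1 := fun h => (Finset.disjoint_left.mp hdisj h) hj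
      simp [hj, h1]
    have eF : ∑ j ∈ (T1 ∪ T0)ᶜ, (a j : ℝ) * (if j ∈ T1 then 1 else if j ∈ T0 then 0 else c)
        = AF * c := by
      rw [hAFdef, Finset.sum_mul]
      refine Finset.sum_congr rfl (fun j hj => ?_)
      have h := Finset.mem_compl.mp hj
      rw [Finset.mem_union] at h
      push_neg at h
      simp [h.1, h.2]
    have hAFc : AF * c = (β : ℝ) - S1 := by
      rw [hcdef, mul_div_cancel₀ _ (ne_of_gt hAFpos)]
    calc ∑ j, (a j : ℝ) * (if j ∈ T1 then 1 else if j ∈ T0 then 0 else c)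
        = (∑ j ∈ T1 ∪ T0, (a j : ℝ) * (if j ∈ T1 then 1 else if j ∈ T0 then 0 else c))
          + ∑ j ∈ (T1 ∪ T0)ᶜ, (a j : ℝ) * (if j ∈ T1 then 1 else if j ∈ T0 then 0 else c) :=
          (Finset.sum_add_sum_compl _ _).symm
    _ = (β : ℝ) := by rw [Finset.sum_union hdisj, e1, e0, eF, hAFc]; ring

lemma tree_lower {n : ℕ} (a : Fin n → ℕ) (β : ℤ) (d : ℕ) (hdn : d ≤ n)
    (hfeas : ∀ σ : List (Fin n × Bool), (σ.map Prod.fst).Nodup → σ.length < d →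
      LPFeasibleAt n a β σ)
    (T : Set (List (Fin n × Bool))) (hT : IsBBTree n a β T) :
    2 ^ d ≤ T.ncard := by
  classical
  obtain ⟨hfin, hroot, hbranch, hleaf⟩ := hT
  rcases Nat.eq_zero_or_pos d with hd0 | hd0
  · subst hd0
    simpa [Nat.one_le_iff_ne_zero, Nat.pos_iff_ne_zero] using (Set.ncard_pos hfin).mpr ⟨[], hroot⟩
  have hn : 0 < n := lt_of_lt_of_le hd0 hdn
  set P : List (Fin n × Bool) → Fin n → Prop := fun σ j =>
    j ∉ σ.map Prod.fst ∧ σ ++ [(j, false)] ∈ T ∧ σ ++ [(j, true)] ∈ T ∧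
      ∀ j' b, σ ++ [(j', b)] ∈ T → j' = j with hPdef
  set J : List (Fin n × Bool) → Fin n := fun σ =>
    if h : ∃ j, P σ j then h.choose else ⟨0, hn⟩ with hJdef
  set f : List Bool → List (Fin n × Bool) :=
    fun v => List.foldr (fun b σ => σ ++ [(J σ, b)]) [] v with hfdef
  have hstep : ∀ b v, f (b :: v) = f v ++ [(J (f v), b)] := by
    intro b v; rfl
  have key : ∀ v : List Bool, v.length ≤ d →
      f v ∈ T ∧ (f v).length = v.length ∧ ((f v).map Prod.fst).Nodup ∧
        (f v).map Prod.snd = v.reverse := by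
    intro v
    induction v with
    | nil => intro _; exact ⟨hroot, by simp [hfdef], by simp [hfdef], by simp [hfdef]⟩
    | cons b v ih =>
      intro hlen
      have hv : v.length ≤ d := by
        simp only [List.length_cons] at hlen; omega
      obtain ⟨hmem, hlenv, hnd, hsnd⟩ := ih hv
      have hvd : (f v).length < d := by
        rw [hlenv]; simp only [List.length_cons] at hlen; omega
      have hfeasv := hfeas (f v) hnd hvd
      have hnotleaf : ∃ j b', f v ++ [(j, b')] ∈ T := by
        by_contra h
        push_neg at h
        rcases hleaf (f v) hmem (fun j b' => h j b') with h' | h'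
        · exact h' hfeasv
        · omega
      have hex : ∃ j, P (f v) j := hbranch (f v) hmem hnotleaf
      have hPJ : P (f v) (J (f v)) := by
        rw [hJdef]; simp only [dif_pos hex]; exact hex.choose_spec
      obtain ⟨hnotin, hf0, hf1, _⟩ := hPJ
      rw [hstep b v]
      refine ⟨?_, ?_, ?_, ?_⟩
      · cases b
        · exact hf0
        · exact hf1
      · simp [hlenv]
      · rw [List.map_append]
        rw [List.nodup_append]
        exact ⟨hnd, by simp, by simp at hnotin ⊢; rintro x hx rfl; tauto⟩
      · simp [hsnd]
  have hfinT : Finite T := hfin.to_subtype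
  have hmapmem : ∀ v : Fin d → Bool, f (List.ofFn v) ∈ T := fun v =>
    (key (List.ofFn v) (by simp)).1
  set g : (Fin d → Bool) → T := fun v => ⟨f (List.ofFn v), hmapmem v⟩ with hgdef
  have hginj : Function.Injective g := by
    intro v w h
    have h' : f (List.ofFn v) = f (List.ofFn w) := congrArg Subtype.val h
    have hsv := (key (List.ofFn v) (by simp)).2.2.2
    have hsw := (key (List.ofFn w) (by simp)).2.2.2
    have hrev : (List.ofFn v).reverse = (List.ofFn w).reverse := by
      rw [← hsv, ← hsw, h']
    have hvw : List.ofFn v = List.ofFn w := List.reverse_injective hrev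
    have := List.ofFn_injective hvw
    exact this
  have hcard := Nat.card_le_card_of_injective g hginj
  have h1 : Nat.card (Fin d → Bool) = 2 ^ d := by
    simp [Nat.card_eq_fintype_card]
  rw [h1] at hcard
  rwa [← Nat.card_coe_set_eq]

lemma count_bad (n M : ℕ) :
    ((Fintype.piFinset (fun _ : Fin n => Finset.Icc 1 M)).filter
      (fun a => (Finset.univ.filter (fun j => M / 8 < a j)).card < n / 2)).card
    ≤ 2 ^ n * ((M / 8) ^ (n / 2) * M ^ (n - n / 2)) := by
  classical
  set m := M / 8 with hmdef
  set k := n / 2 with hkdef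
  have hsub : ((Fintype.piFinset (fun _ : Fin n => Finset.Icc 1 M)).filter
      (fun a => (Finset.univ.filter (fun j => m < a j)).card < k)) ⊆
      (Finset.univ.powersetCard k).biUnion
        (fun S => Fintype.piFinset
          (fun j => if j ∈ S then Finset.Icc 1 m else Finset.Icc 1 M)) := by
    intro a ha
    obtain ⟨hbox, hlt⟩ := Finset.mem_filter.mp ha
    rw [Fintype.mem_piFinset] at hbox
    have hsmall : k ≤ (Finset.univ.filter (fun j => a j ≤ m)).card := by
      have htot := Finset.card_filter_add_card_filter_not
        (s := (Finset.univ : Finset (Fin n))) (p := fun j => m < a j)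
      have heq : (Finset.univ.filter (fun j => ¬ m < a j)) =
          (Finset.univ.filter (fun j => a j ≤ m)) := by
        simp [not_lt]
      rw [heq, Finset.card_univ, Fintype.card_fin] at htot
      omega
    obtain ⟨S, hS, hScard⟩ := Finset.exists_subset_card_eq hsmall
    refine Finset.mem_biUnion.mpr ⟨S, Finset.mem_powersetCard.mpr ⟨Finset.subset_univ S, hScard⟩, ?_⟩
    rw [Fintype.mem_piFinset]
    intro j
    by_cases hj : j ∈ S
    · have := (Finset.mem_filter.mp (hS hj)).2
      have h1 := Finset.mem_Icc.mp (hbox j)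
      simp only [hj, if_true, Finset.mem_Icc]
      exact ⟨h1.1, this⟩
    · simpa [hj] using hbox j
  calc ((Fintype.piFinset (fun _ : Fin n => Finset.Icc 1 M)).filter
      (fun a => (Finset.univ.filter (fun j => m < a j)).card < k)).card
      ≤ ((Finset.univ.powersetCard k).biUnion
        (fun S => Fintype.piFinset
          (fun j => if j ∈ S then Finset.Icc 1 m else Finset.Icc 1 M))).card :=
        Finset.card_le_card hsub
    _ ≤ ∑ S ∈ Finset.univ.powersetCard k, (Fintype.piFinset
          (fun j => if j ∈ S then Finset.Icc 1 m else Finset.Icc 1 M)).card :=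
        Finset.card_biUnion_le
    _ ≤ ∑ _S ∈ Finset.univ.powersetCard k, m ^ k * M ^ (n - k) := by
        refine Finset.sum_le_sum (fun S hS => ?_)
        obtain ⟨hSsub, hScard⟩ := Finset.mem_powersetCard.mp hS
        rw [Fintype.card_piFinset]
        have : ∀ j : Fin n, ((if j ∈ S then Finset.Icc 1 m else Finset.Icc 1 M)).card
            = if j ∈ S then m else M := by
          intro j; by_cases hj : j ∈ S <;> simp [hj]
        rw [Finset.prod_congr rfl (fun j _ => this j)]
        rw [← Finset.prod_sdiff hSsub]
        have e1 : ∏ j ∈ S, (if j ∈ S then m else M) = m ^ k := by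
          rw [Finset.prod_congr rfl (fun j hj => if_pos hj), Finset.prod_const, hScard]
        have e2 : ∏ j ∈ Finset.univ \ S, (if j ∈ S then m else M) = M ^ (n - k) := by
          rw [Finset.prod_congr rfl (fun j hj => if_neg (Finset.mem_sdiff.mp hj).2),
            Finset.prod_const, Finset.card_sdiff_of_subset hSsub, Finset.card_univ, Fintype.card_fin,
            hScard]
        rw [e1, e2, mul_comm]
    _ = (Finset.univ.powersetCard k).card * (m ^ k * M ^ (n - k)) := by
        rw [Finset.sum_const, smul_eq_mul]
    _ ≤ 2 ^ n * (m ^ k * M ^ (n - k)) := by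
        apply Nat.mul_le_mul_right
        rw [Finset.card_powersetCard, Finset.card_univ, Fintype.card_fin]
        have hkn : k ≤ n := Nat.div_le_self n 2
        calc n.choose k ≤ ∑ i ∈ Finset.range (n + 1), n.choose i :=
              Finset.single_le_sum (fun i _ => Nat.zero_le _) (Finset.mem_range.mpr (by omega))
          _ = 2 ^ n := Nat.sum_range_choose n

lemma good_mem (r ε : ℝ) (hr0 : 0 < r) (hr1 : r < 1)
    (n M : ℕ) (hM1 : 1 ≤ M)
    (hcond : (⌈(n : ℝ) ^ ((1 : ℝ) - ε)⌉₊ : ℝ) + 1 ≤ min r (1 - r) * ((n : ℝ) - 1) / 16)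
    (a : Fin n → ℕ) (hbox : ∀ j, 1 ≤ a j ∧ a j ≤ M)
    (hlarge : n / 2 ≤ (Finset.univ.filter (fun j => M / 8 < a j)).card) :
    ∀ T : Set (List (Fin n × Bool)),
      IsBBTree n a ⌊r * ∑ j, (a j : ℝ)⌋ T →
        (2 : ℝ) ^ ((n : ℝ) ^ ((1 : ℝ) - ε)) ≤ (T.ncard : ℝ) := by
  intro T hT
  classical
  set d := ⌈(n : ℝ) ^ ((1 : ℝ) - ε)⌉₊ with hddef
  set Sr := ∑ j, (a j : ℝ) with hSrdef
  set β := ⌊r * Sr⌋ with hβdef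
  set m := M / 8 with hmdef
  have hmin : 0 < min r (1 - r) := lt_min hr0 (by linarith)
  have hminr : min r (1 - r) ≤ r := min_le_left _ _
  have hmin1r : min r (1 - r) ≤ 1 - r := min_le_right _ _
  have hd0 : (0 : ℝ) ≤ (d : ℝ) := Nat.cast_nonneg _
  have hMpos : (1 : ℝ) ≤ (M : ℝ) := by exact_mod_cast hM1
  -- n is large
  have hn17 : (16 : ℝ) ≤ (n : ℝ) - 1 := by
    have hA : (16 : ℝ) ≤ min r (1 - r) * ((n : ℝ) - 1) := by linarith
    have hB : (0 : ℝ) < (n : ℝ) - 1 := by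
      by_contra h
      push_neg at h
      nlinarith [hA, hmin, h]
    have hC : min r (1 - r) * ((n : ℝ) - 1) ≤ 1 * ((n : ℝ) - 1) :=
      mul_le_mul_of_nonneg_right (le_trans hminr hr1.le) hB.le
    linarith
  -- (n/2 : ℕ) ≥ (n-1)/2
  have hk2 : ((n : ℝ) - 1) / 2 ≤ ((n / 2 : ℕ) : ℝ) := by
    have hnat : n ≤ 2 * (n / 2) + 1 := by omega
    have : (n : ℝ) ≤ 2 * ((n / 2 : ℕ) : ℝ) + 1 := by exact_mod_cast hnat
    linarith
  -- m + 1 > M / 8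
  have hm8 : (M : ℝ) / 8 ≤ (m : ℝ) + 1 := by
    have hnat : M ≤ 8 * (M / 8) + 8 := by omega
    have : (M : ℝ) ≤ 8 * ((m : ℕ) : ℝ) + 8 := by exact_mod_cast hnat
    linarith
  -- sum lower bound
  have hsumL : ((n / 2 : ℕ) : ℝ) * ((m : ℝ) + 1) ≤ Sr := by
    set L := Finset.univ.filter (fun j => m < a j) with hLdef
    have h1 : L.card • ((m : ℝ) + 1) ≤ ∑ j ∈ L, (a j : ℝ) := by
      refine Finset.card_nsmul_le_sum L _ _ (fun j hj => ?_)
      have h := (Finset.mem_filter.mp hj).2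
      have : m + 1 ≤ a j := h
      exact_mod_cast this
    rw [nsmul_eq_mul] at h1
    have h2 : ∑ j ∈ L, (a j : ℝ) ≤ Sr := by
      refine Finset.sum_le_sum_of_subset_of_nonneg (Finset.subset_univ L) (fun j _ _ => by positivity)
    have h3 : ((n / 2 : ℕ) : ℝ) ≤ (L.card : ℝ) := by exact_mod_cast hlarge
    nlinarith [h1, h2, h3]
  have hSrlow : ((n : ℝ) - 1) * (M : ℝ) / 16 ≤ Sr := by
    have h1 : ((n : ℝ) - 1) / 2 * ((m : ℝ) + 1) ≤ ((n / 2 : ℕ) : ℝ) * ((m : ℝ) + 1) :=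
      mul_le_mul_of_nonneg_right hk2 (by positivity)
    have h2 : ((n : ℝ) - 1) / 2 * ((M : ℝ) / 8) ≤ ((n : ℝ) - 1) / 2 * ((m : ℝ) + 1) :=
      mul_le_mul_of_nonneg_left hm8 (by linarith)
    have h3 : ((n : ℝ) - 1) * (M : ℝ) / 16 = ((n : ℝ) - 1) / 2 * ((M : ℝ) / 8) := by ring
    linarith
  have hSrpos : (0 : ℝ) < Sr := by
    have h1 : (16 : ℝ) * 1 ≤ ((n : ℝ) - 1) * (M : ℝ) :=
      mul_le_mul hn17 hMpos zero_le_one (by linarith)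
    linarith
  -- key quantity
  have hkey : ((d : ℝ) + 1) * (M : ℝ) ≤ min r (1 - r) * Sr := by
    have h2 : ((d : ℝ) + 1) * (M : ℝ) ≤ min r (1 - r) * (((n : ℝ) - 1) / 16) * (M : ℝ) := by
      have := mul_le_mul_of_nonneg_right hcond (by positivity : (0:ℝ) ≤ (M:ℝ))
      calc ((d : ℝ) + 1) * (M : ℝ) ≤ min r (1 - r) * ((n : ℝ) - 1) / 16 * M := this
        _ = min r (1 - r) * (((n : ℝ) - 1) / 16) * (M : ℝ) := by ring
    calc ((d : ℝ) + 1) * (M : ℝ) ≤ min r (1 - r) * (((n : ℝ) - 1) / 16) * (M : ℝ) := h2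
      _ = min r (1 - r) * (((n : ℝ) - 1) * (M : ℝ) / 16) := by ring
      _ ≤ min r (1 - r) * Sr := mul_le_mul_of_nonneg_left hSrlow hmin.le
  have hexp : ((d : ℝ) + 1) * (M : ℝ) = (d : ℝ) * (M : ℝ) + (M : ℝ) := by ring
  have hβlow : (d : ℝ) * (M : ℝ) ≤ (β : ℝ) := by
    have h1 : r * Sr - 1 < (β : ℝ) := Int.sub_one_lt_floor _
    have h3 : min r (1 - r) * Sr ≤ r * Sr := mul_le_mul_of_nonneg_right hminr hSrpos.le
    linarith
  have hβhigh : (β : ℝ) ≤ Sr - (d : ℝ) * (M : ℝ) := by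
    have h1 : (β : ℝ) ≤ r * Sr := Int.floor_le _
    have h3 : min r (1 - r) * Sr ≤ (1 - r) * Sr := mul_le_mul_of_nonneg_right hmin1r hSrpos.le
    linarith
  have hdn : d < n := by
    have h1 : (d : ℝ) + 1 ≤ ((n : ℝ) - 1) / 16 := by
      calc (d : ℝ) + 1 ≤ min r (1 - r) * ((n : ℝ) - 1) / 16 := hcond
        _ ≤ 1 * ((n : ℝ) - 1) / 16 := by
            have h5 : min r (1 - r) * ((n : ℝ) - 1) ≤ 1 * ((n : ℝ) - 1) :=
              mul_le_mul_of_nonneg_right (le_trans hminr hr1.le) (by linarith)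
            linarith
        _ = ((n : ℝ) - 1) / 16 := by ring
    have : (d : ℝ) < (n : ℝ) := by linarith
    exact_mod_cast this
  have hfeas : ∀ σ : List (Fin n × Bool), (σ.map Prod.fst).Nodup → σ.length < d →
      LPFeasibleAt n a β σ := by
    intro σ hnod hlen
    have hlN : (σ.length : ℝ) ≤ (d : ℝ) := by exact_mod_cast hlen.le
    have hlM : (σ.length : ℝ) * M ≤ (d : ℝ) * M :=
      mul_le_mul_of_nonneg_right hlN (by positivity)
    exact lp_feasible a β M (fun j => (hbox j).1) (fun j => (hbox j).2) σ hnod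
      (lt_trans hlen hdn) (le_trans hlM hβlow) (by rw [← hSrdef]; linarith [hβhigh, hlM])
  have htree := tree_lower a β d hdn.le hfeas T hT
  have h2d : (2 : ℝ) ^ ((n : ℝ) ^ ((1 : ℝ) - ε)) ≤ (2 : ℝ) ^ (d : ℝ) :=
    Real.rpow_le_rpow_of_exponent_le one_le_two (Nat.le_ceil _)
  rw [Real.rpow_natCast] at h2d
  calc (2 : ℝ) ^ ((n : ℝ) ^ ((1 : ℝ) - ε)) ≤ (2 : ℝ) ^ d := h2d
    _ ≤ (T.ncard : ℝ) := by exact_mod_cast htree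

lemma box_card (n M : ℕ) : (Fintype.piFinset (fun _ : Fin n => Finset.Icc 1 M)).card = M ^ n := by
  simp [Fintype.card_piFinset]

lemma ncard_le_box {n M : ℕ} (S : Set (Fin n → ℕ)) (hS : ∀ a ∈ S, ∀ j, 1 ≤ a j ∧ a j ≤ M) :
    S.ncard ≤ M ^ n := by
  classical
  have hsub : S ⊆ ↑(Fintype.piFinset (fun _ : Fin n => Finset.Icc 1 M)) := by
    intro a ha
    simp only [Finset.mem_coe, Fintype.mem_piFinset, Finset.mem_Icc]
    exact fun j => hS a ha j
  calc S.ncard ≤ (↑(Fintype.piFinset (fun _ : Fin n => Finset.Icc 1 M)) : Set (Fin n → ℕ)).ncard :=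
        Set.ncard_le_ncard hsub (Finset.finite_toSet _)
    _ = M ^ n := by rw [Set.ncard_coe_finset, box_card]

lemma lower_card (r ε : ℝ) (hr0 : 0 < r) (hr1 : r < 1) (n M : ℕ) (hM1 : 1 ≤ M)
    (hcond : (⌈(n : ℝ) ^ ((1 : ℝ) - ε)⌉₊ : ℝ) + 1 ≤ min r (1 - r) * ((n : ℝ) - 1) / 16) :
    M ^ n ≤ Set.ncard {a : Fin n → ℕ |
        (∀ j, 1 ≤ a j ∧ a j ≤ M) ∧
        ∀ T : Set (List (Fin n × Bool)),
          IsBBTree n a ⌊r * ∑ j, (a j : ℝ)⌋ T →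
            (2 : ℝ) ^ ((n : ℝ) ^ ((1 : ℝ) - ε)) ≤ (T.ncard : ℝ)}
      + 2 ^ n * ((M / 8) ^ (n / 2) * M ^ (n - n / 2)) := by
  classical
  set box := Fintype.piFinset (fun _ : Fin n => Finset.Icc 1 M) with hboxdef
  set G := box.filter (fun a => ¬ (Finset.univ.filter (fun j => M / 8 < a j)).card < n / 2)
    with hGdef
  have hGsub : (↑G : Set (Fin n → ℕ)) ⊆ {a : Fin n → ℕ |
      (∀ j, 1 ≤ a j ∧ a j ≤ M) ∧
      ∀ T : Set (List (Fin n × Bool)),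
        IsBBTree n a ⌊r * ∑ j, (a j : ℝ)⌋ T →
          (2 : ℝ) ^ ((n : ℝ) ^ ((1 : ℝ) - ε)) ≤ (T.ncard : ℝ)} := by
    intro a ha
    rw [Finset.mem_coe, hGdef, Finset.mem_filter] at ha
    obtain ⟨hbox, hlarge⟩ := ha
    rw [hboxdef, Fintype.mem_piFinset] at hbox
    have hbox' : ∀ j, 1 ≤ a j ∧ a j ≤ M := fun j => Finset.mem_Icc.mp (hbox j)
    exact ⟨hbox', good_mem r ε hr0 hr1 n M hM1 hcond a hbox' (not_lt.mp hlarge)⟩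
  have hGcard : G.card ≤ Set.ncard {a : Fin n → ℕ |
      (∀ j, 1 ≤ a j ∧ a j ≤ M) ∧
      ∀ T : Set (List (Fin n × Bool)),
        IsBBTree n a ⌊r * ∑ j, (a j : ℝ)⌋ T →
          (2 : ℝ) ^ ((n : ℝ) ^ ((1 : ℝ) - ε)) ≤ (T.ncard : ℝ)} := by
    rw [← Set.ncard_coe_finset]
    refine Set.ncard_le_ncard hGsub ?_
    refine Set.Finite.subset (Finset.finite_toSet box) ?_
    intro a ha
    rw [Finset.mem_coe, hboxdef, Fintype.mem_piFinset]
    exact fun j => Finset.mem_Icc.mpr (ha.1 j)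
  have hsplit : G.card + (box.filter
      (fun a => (Finset.univ.filter (fun j => M / 8 < a j)).card < n / 2)).card = M ^ n := by
    rw [← box_card n M, hGdef]
    rw [add_comm]
    exact Finset.card_filter_add_card_filter_not
      (s := box) (p := fun a => (Finset.univ.filter (fun j => M / 8 < a j)).card < n / 2)
  have hbad := count_bad n M
  calc M ^ n = G.card + (box.filter
        (fun a => (Finset.univ.filter (fun j => M / 8 < a j)).card < n / 2)).card := hsplit.symm
    _ ≤ _ + _ := Nat.add_le_add hGcard hbad

lemma nat_fact1 (n : ℕ) : n ≤ 2 * (n / 2) + 1 := by omega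

lemma nat_fact2 (n : ℕ) : n / 2 + (n - n / 2) = n := by omega

/-- Main theorem: with `M = ⌊10^(n/2)⌋`, `a₁,…,aₙ` i.i.d. uniform on `{1,…,M}` and
`β = ⌊r ∑ aⱼ⌋`, the probability that every branch-and-bound tree for the instance has at
least `2^(n^(1-ε))` nodes tends to 1 as `n → ∞`. -/
theorem stmt_16 (r ε : ℝ) (hr0 : 0 < r) (hr1 : r < 1) (hε0 : 0 < ε) (hε1 : ε < 1) :
    Tendsto (fun n : ℕ =>
        ((Set.ncard {a : Fin n → ℕ |
            (∀ j, 1 ≤ a j ∧ a j ≤ ⌊(10 : ℝ) ^ ((n : ℝ) / 2)⌋₊) ∧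
            ∀ T : Set (List (Fin n × Bool)),
              IsBBTree n a ⌊r * ∑ j, (a j : ℝ)⌋ T →
                (2 : ℝ) ^ ((n : ℝ) ^ ((1 : ℝ) - ε)) ≤ (Set.ncard T : ℝ)} : ℝ)
          / (⌊(10 : ℝ) ^ ((n : ℝ) / 2)⌋₊ : ℝ) ^ n))
      atTop (nhds 1) := by
  classical
  have hmin : 0 < min r (1 - r) := lt_min hr0 (by linarith)
  set c' : ℝ := min r (1 - r) / 16 with hc'def
  have hc' : (0 : ℝ) < c' := by rw [hc'def]; positivity
  have hM1 : ∀ n : ℕ, 1 ≤ ⌊(10 : ℝ) ^ ((n : ℝ) / 2)⌋₊ := by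
    intro n
    apply Nat.le_floor
    rw [Nat.cast_one]
    calc (1 : ℝ) = (10 : ℝ) ^ (0 : ℝ) := (Real.rpow_zero _).symm
      _ ≤ (10 : ℝ) ^ ((n : ℝ) / 2) :=
        Real.rpow_le_rpow_of_exponent_le (by norm_num) (by positivity)
  have hev : ∀ᶠ n : ℕ in atTop,
      (⌈(n : ℝ) ^ ((1 : ℝ) - ε)⌉₊ : ℝ) + 1 ≤ min r (1 - r) * ((n : ℝ) - 1) / 16 := by
    have hE1 : ∀ᶠ n : ℕ in atTop, (n : ℝ) ^ (-ε) < c' / 4 := by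
      have h := (tendsto_rpow_neg_atTop hε0).comp (tendsto_natCast_atTop_atTop (R := ℝ))
      exact h.eventually_lt_const (by positivity)
    have hE2 : ∀ᶠ n : ℕ in atTop, (2 : ℝ) + c' ≤ c' / 4 * (n : ℝ) := by
      have h := (tendsto_natCast_atTop_atTop (R := ℝ)).const_mul_atTop
        (show (0 : ℝ) < c' / 4 by positivity)
      exact h.eventually_ge_atTop _
    filter_upwards [hE1, hE2, eventually_ge_atTop 1] with n h1 h2 h3
    have hn1 : (1 : ℝ) ≤ (n : ℝ) := by exact_mod_cast h3
    have hx0 : (0 : ℝ) ≤ (n : ℝ) ^ ((1 : ℝ) - ε) := Real.rpow_nonneg (by linarith) _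
    have hxsplit : (n : ℝ) ^ ((1 : ℝ) - ε) = (n : ℝ) * (n : ℝ) ^ (-ε) := by
      rw [sub_eq_add_neg, Real.rpow_add (by linarith : (0 : ℝ) < (n : ℝ)), Real.rpow_one]
    have hxle : (n : ℝ) ^ ((1 : ℝ) - ε) ≤ c' / 4 * (n : ℝ) := by
      rw [hxsplit]
      calc (n : ℝ) * (n : ℝ) ^ (-ε) ≤ (n : ℝ) * (c' / 4) :=
            mul_le_mul_of_nonneg_left h1.le (by linarith)
        _ = c' / 4 * (n : ℝ) := by ring
    have hceil : (⌈(n : ℝ) ^ ((1 : ℝ) - ε)⌉₊ : ℝ) ≤ (n : ℝ) ^ ((1 : ℝ) - ε) + 1 :=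
      (Nat.ceil_lt_add_one hx0).le
    have heq : min r (1 - r) * ((n : ℝ) - 1) / 16 = c' * (n : ℝ) - c' := by
      rw [hc'def]; ring
    rw [heq]
    have hcn : (0 : ℝ) ≤ c' * (n : ℝ) := mul_nonneg hc'.le (by linarith)
    linarith
  have hhalf : Tendsto (fun n : ℕ => (1 / 2 : ℝ) ^ (n / 2)) atTop (nhds 0) := by
    have h1 : Tendsto (fun k : ℕ => (1 / 2 : ℝ) ^ k) atTop (nhds 0) :=
      tendsto_pow_atTop_nhds_zero_of_lt_one (by norm_num) (by norm_num)
    have h2 : Tendsto (fun n : ℕ => n / 2) atTop atTop := by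
      refine Filter.tendsto_atTop_atTop.mpr (fun b => ⟨2 * b, fun n hn => ?_⟩)
      omega
    exact h1.comp h2
  have hL : Tendsto (fun n : ℕ => 1 - 2 * (1 / 2 : ℝ) ^ (n / 2)) atTop (nhds 1) := by
    have h := (hhalf.const_mul (2 : ℝ)).const_sub 1
    simpa using h
  refine tendsto_of_tendsto_of_tendsto_of_le_of_le' hL tendsto_const_nhds ?_ ?_
  · filter_upwards [hev] with n hcond
    set M := ⌊(10 : ℝ) ^ ((n : ℝ) / 2)⌋₊ with hMdef
    have hM := hM1 n
    have hMpos : (0 : ℝ) < (M : ℝ) := by exact_mod_cast Nat.lt_of_lt_of_le Nat.zero_lt_one hM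
    have hMnpos : (0 : ℝ) < (M : ℝ) ^ n := by positivity
    have hlc := lower_card r ε hr0 hr1 n M hM hcond
    have hlcR : ((M : ℝ)) ^ n ≤ (Set.ncard {a : Fin n → ℕ |
        (∀ j, 1 ≤ a j ∧ a j ≤ M) ∧
        ∀ T : Set (List (Fin n × Bool)),
          IsBBTree n a ⌊r * ∑ j, (a j : ℝ)⌋ T →
            (2 : ℝ) ^ ((n : ℝ) ^ ((1 : ℝ) - ε)) ≤ (T.ncard : ℝ)} : ℝ)
        + ((2 ^ n * ((M / 8) ^ (n / 2) * M ^ (n - n / 2)) : ℕ) : ℝ) := by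
      exact_mod_cast hlc
    have hfrac : ((2 ^ n * ((M / 8) ^ (n / 2) * M ^ (n - n / 2)) : ℕ) : ℝ)
        ≤ 2 * (1 / 2 : ℝ) ^ (n / 2) * (M : ℝ) ^ n := by
      push_cast
      have hmr : ((M / 8 : ℕ) : ℝ) ≤ (M : ℝ) / 8 := Nat.cast_div_le
      have h2n : (2 : ℝ) ^ n ≤ 2 * 4 ^ (n / 2) := by
        calc (2 : ℝ) ^ n ≤ (2 : ℝ) ^ (2 * (n / 2) + 1) := by
              exact pow_le_pow_right₀ (by norm_num) (nat_fact1 n)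
          _ = 2 * 4 ^ (n / 2) := by
              rw [pow_succ, pow_mul]; norm_num; ring
      have hMn : (M : ℝ) ^ n = (M : ℝ) ^ (n / 2) * (M : ℝ) ^ (n - n / 2) := by
        rw [← pow_add, nat_fact2]
      have hm8k : ((M / 8 : ℕ) : ℝ) ^ (n / 2) ≤ ((M : ℝ) / 8) ^ (n / 2) :=
        pow_le_pow_left₀ (by positivity) hmr _
      calc (2 : ℝ) ^ n * (((M / 8 : ℕ) : ℝ) ^ (n / 2) * (M : ℝ) ^ (n - n / 2))
          ≤ (2 * 4 ^ (n / 2)) * (((M : ℝ) / 8) ^ (n / 2) * (M : ℝ) ^ (n - n / 2)) := by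
            refine mul_le_mul h2n ?_ (by positivity) (by positivity)
            exact mul_le_mul hm8k le_rfl (by positivity) (by positivity)
        _ = 2 * ((4 : ℝ) ^ (n / 2) * ((M : ℝ) / 8) ^ (n / 2)) * (M : ℝ) ^ (n - n / 2) := by
            ring
        _ = 2 * ((1 / 2 : ℝ) ^ (n / 2) * (M : ℝ) ^ (n / 2)) * (M : ℝ) ^ (n - n / 2) := by
            rw [← mul_pow, ← mul_pow]; congr 2; ring
        _ = 2 * (1 / 2 : ℝ) ^ (n / 2) * (M : ℝ) ^ n := by rw [hMn]; ring
    rw [le_div_iff₀ hMnpos]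
    linarith
  · refine Filter.Eventually.of_forall (fun n => ?_)
    set M := ⌊(10 : ℝ) ^ ((n : ℝ) / 2)⌋₊ with hMdef
    have hM := hM1 n
    have hMpos : (0 : ℝ) < (M : ℝ) := by exact_mod_cast Nat.lt_of_lt_of_le Nat.zero_lt_one hM
    have hMnpos : (0 : ℝ) < (M : ℝ) ^ n := by positivity
    rw [div_le_one hMnpos]
    have h := ncard_le_box (M := M) {a : Fin n → ℕ |
        (∀ j, 1 ≤ a j ∧ a j ≤ M) ∧
        ∀ T : Set (List (Fin n × Bool)),
          IsBBTree n a ⌊r * ∑ j, (a j : ℝ)⌋ T →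
            (2 : ℝ) ^ ((n : ℝ) ^ ((1 : ℝ) - ε)) ≤ (T.ncard : ℝ)}
      (fun a ha => ha.1)
    exact_mod_cast h
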